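/- arXiv:1512.02792 — 3 statements merged into one kernel-verified Lean document; each statement's English description precedes it below -/
import Mathlib

section
/- Let δ be an ordinal of uncountable cofinality, let S' ⊆ δ be a stationary subset of δ consisting of limit ordinals of cofinality ω, and for each α ∈ S' let s_α : ℕ → α be a strictly increasing function with sup_{n<ω} s_α(n) = α. Then there exists a natural number n such that for every club E ⊆ δ, the set {s_α(n) : α ∈ S' ∩ E} is unbounded in δ. -/
/-- `C` is a club in the ordinal `δ`: a subset of `δ` that is unbounded in `δ` and
closed (the supremum of any nonempty subset, if below `δ`, belongs to `C`). -/
def IsClubIn (C : Set Ordinal) (δ : Ordinal) : Prop :=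
  (∀ α ∈ C, α < δ) ∧ (∀ β < δ, ∃ α ∈ C, β ≤ α) ∧
    ∀ x ⊆ C, x.Nonempty → sSup x < δ → sSup x ∈ C

/-- `T` is stationary in the ordinal `δ`: a subset of `δ` meeting every club in `δ`. -/
def IsStationaryIn (T : Set Ordinal) (δ : Ordinal) : Prop :=
  (∀ α ∈ T, α < δ) ∧ ∀ C, IsClubIn C δ → (T ∩ C).Nonempty

/-- The supremum of countably many ordinals below `δ` is below `δ` when `cof δ > ℵ₀`. -/
lemma iSup_nat_lt (δ : Ordinal) (hδ : Cardinal.aleph0 < δ.cof) (f : ℕ → Ordinal)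
    (hf : ∀ n, f n < δ) : (⨆ n, f n) < δ :=
  Ordinal.iSup_lt_ord_lift (by rwa [Cardinal.mk_nat, Cardinal.lift_aleph0]) hf

/-- A countable intersection of clubs in `δ` is a club in `δ` when `cof δ > ℵ₀`. -/
lemma club_iInter (δ : Ordinal) (hδ : Cardinal.aleph0 < δ.cof)
    (F : ℕ → Set Ordinal) (hF : ∀ n, IsClubIn (F n) δ) : IsClubIn (⋂ n, F n) δ := by
  have hsub : ∀ n, ∀ α ∈ F n, α < δ := fun n => (hF n).1
  refine ⟨fun α hα => hsub 0 α (Set.mem_iInter.mp hα 0), ?_, ?_⟩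
  · -- unbounded
    intro β hβ
    have key : ∀ n γ, ∃ α, γ < δ → α ∈ F n ∧ γ ≤ α ∧ α < δ := by
      intro n γ
      by_cases h : γ < δ
      · obtain ⟨α, hα, hγα⟩ := (hF n).2.1 γ h
        exact ⟨α, fun _ => ⟨hα, hγα, hsub n α hα⟩⟩
      · exact ⟨0, fun h' => absurd h' h⟩
    choose e he using key
    set g : ℕ → Ordinal := fun k => Nat.rec β (fun _ γ => ⨆ n, e n γ) k with hg
    have hg0 : g 0 = β := rfl
    have hgs : ∀ k, g (k + 1) = ⨆ n, e n (g k) := fun k => rfl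
    have hglt : ∀ k, g k < δ := by
      intro k
      induction k with
      | zero => exact hβ
      | succ k ih =>
        rw [hgs]
        exact iSup_nat_lt δ hδ _ (fun n => (he n (g k) ih).2.2)
    set γstar := ⨆ k, g k with hγstar
    have hγlt : γstar < δ := iSup_nat_lt δ hδ _ hglt
    refine ⟨γstar, Set.mem_iInter.mpr fun n => ?_, Ordinal.le_iSup g 0⟩
    have hx : Set.range (fun k => e n (g k)) ⊆ F n :=
      Set.range_subset_iff.mpr fun k => (he n (g k) (hglt k)).1
    have heq : sSup (Set.range (fun k => e n (g k))) = γstar := by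
      have h1 : sSup (Set.range (fun k => e n (g k))) = ⨆ k, e n (g k) := rfl
      rw [h1]
      apply le_antisymm
      · apply Ordinal.iSup_le
        intro k
        exact le_trans (le_trans (Ordinal.le_iSup (fun m => e m (g k)) n) (hgs k).ge)
          (Ordinal.le_iSup g (k + 1))
      · apply Ordinal.iSup_le
        intro k
        exact le_trans (he n (g k) (hglt k)).2.1 (Ordinal.le_iSup (fun j => e n (g j)) k)
    have := (hF n).2.2 _ hx (Set.range_nonempty _) (heq ▸ hγlt)
    rwa [heq] at this
  · intro x hx hne hlt
    refine Set.mem_iInter.mpr fun n =>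
      (hF n).2.2 x (fun a ha => Set.mem_iInter.mp (hx ha) n) hne hlt

/-- If `S'` is a stationary subset of `δ` (of uncountable cofinality) consisting of limit
ordinals of cofinality `ω`, with witnessing cofinal `ω`-sequences `s α`, then there is
`n < ω` such that `{s α n : α ∈ S' ∩ E}` is unbounded in `δ` for every club `E ⊆ δ`. -/
theorem exists_n_unbounded (δ : Ordinal)
    (hδ : Cardinal.aleph0 < δ.cof)
    (S' : Set Ordinal) (hS' : IsStationaryIn S' δ)
    (hlim : ∀ α ∈ S', Order.IsSuccLimit α ∧ Ordinal.cof α = Cardinal.aleph0)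
    (s : Ordinal → ℕ → Ordinal)
    (hmono : ∀ α ∈ S', StrictMono (s α))
    (hlt : ∀ α ∈ S', ∀ n, s α n < α)
    (hsup : ∀ α ∈ S', (⨆ n, s α n) = α) :
    ∃ n : ℕ, ∀ E, IsClubIn E δ → ∀ β < δ, ∃ α ∈ S' ∩ E, β ≤ s α n := by
  by_contra h
  push_neg at h
  choose E hE β hβδ hβ using h
  set βs := ⨆ n, β n with hβs
  have hβslt : βs < δ := iSup_nat_lt δ hδ β hβδ
  have hδlim : Order.IsSuccLimit δ := Ordinal.aleph0_le_cof.mp hδ.le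
  set D : Set Ordinal := {γ | βs < γ ∧ γ < δ} with hD
  have hDclub : IsClubIn D δ := by
    refine ⟨fun α hα => hα.2, ?_, ?_⟩
    · intro b hb
      refine ⟨max (βs + 1) b, ⟨?_, ?_⟩, le_max_right _ _⟩
      · exact lt_of_lt_of_le (Order.lt_succ βs) (le_max_left _ _)
      · exact max_lt (hδlim.succ_lt hβslt) hb
    · intro x hx hne hlt'
      obtain ⟨y, hy⟩ := hne
      have hyD := hx hy
      have : y ≤ sSup x := le_csSup ⟨δ, fun z hz => ((hx hz).2).le⟩ hy
      exact ⟨lt_of_lt_of_le hyD.1 this, hlt'⟩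
  set F : ℕ → Set Ordinal := fun n => Nat.rec D (fun k _ => E k) n with hF
  have hFclub : ∀ n, IsClubIn (F n) δ := by
    intro n; cases n with
    | zero => exact hDclub
    | succ k => exact hE k
  obtain ⟨α, hαS, hαC⟩ := hS'.2 _ (club_iInter δ hδ F hFclub)
  have hαD : α ∈ D := Set.mem_iInter.mp hαC 0
  have hαE : ∀ n, α ∈ E n := fun n => Set.mem_iInter.mp hαC (n + 1)
  have : α ≤ βs := by
    rw [← hsup α hαS]
    exact Ordinal.iSup_le fun n =>
      le_trans (hβ n α ⟨hαS, hαE n⟩).le (Ordinal.le_iSup β n)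
  exact absurd (lt_of_le_of_lt this hαD.1) (lt_irrefl α)
end

section
/- Let ζ be an ordinal and let ⟨μ_i : i < ζ⟩ and ⟨ν_i : i < ζ⟩ be sequences of regular cardinals with ζ < μ_0 and μ_i ≤ ν_i < μ_j for all i < j < ζ. Let λ be a cardinal with λ ≥ sup_{i<ζ} ν_i. Then there exists a projection from the Easton collapse E(μ_0, λ) to the full-support product ∏_{i<ζ} E(μ_i, ν_i), where the product is ordered coordinatewise. -/
/-- A condition in the Levy collapse `Col(μ, γ)`: a partial function from `μ` to `γ`
(coded as a functional set of pairs of ordinals, with domain contained in `μ` and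
values in `γ`) whose domain has cardinality less than `μ`. The order is reverse
inclusion (`p ≤ q` iff `q ⊆ p`), with the empty function as greatest element. -/
def IsLevyCond (μ γ : Cardinal.{0}) (p : Set (Ordinal × Ordinal)) : Prop :=
  (∀ q ∈ p, q.1 < μ.ord ∧ q.2 < γ.ord) ∧
  (∀ a b b', (a, b) ∈ p → (a, b') ∈ p → b = b') ∧
  Cardinal.mk ↥(Prod.fst '' p) < Cardinal.lift.{1} μ

/-- A cardinal `γ` is strong regular if it is regular and `γ^{<γ} = γ`. -/
def StrongRegular (γ : Cardinal.{0}) : Prop :=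
  γ.IsRegular ∧ γ ^< γ = γ

/-- A condition in the Easton collapse `E(μ, ν)`: a function assigning to each strong
regular `γ ∈ [μ, ν)` a condition in `Col(μ, γ)` (and `∅` elsewhere) such that for every
regular `λ' ≤ ν`, fewer than `λ'` coordinates below `λ'` are nonempty. The order is
coordinatewise reverse inclusion, with the everywhere-`∅` function as greatest element. -/
def IsEastonCond (μ ν : Cardinal.{0}) (p : Cardinal.{0} → Set (Ordinal × Ordinal)) : Prop :=
  (∀ γ, p γ ≠ ∅ → StrongRegular γ ∧ μ ≤ γ ∧ γ < ν) ∧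
  (∀ γ, StrongRegular γ → μ ≤ γ → γ < ν → IsLevyCond μ γ (p γ)) ∧
  (∀ l : Cardinal.{0}, l.IsRegular → l ≤ ν →
    Cardinal.mk {γ : Cardinal.{0} // γ < l ∧ p γ ≠ ∅} < Cardinal.lift.{1} l)

open Cardinal Set

namespace EastonProjAux

noncomputable section

abbrev PP := Set (Ordinal.{0} × Ordinal.{0})

def Functional (p : PP) : Prop := ∀ a b b', (a,b) ∈ p → (a,b') ∈ p → b = b'

def pval (p : PP) (x : Ordinal.{0}) : Ordinal.{0} := sInf {b | (x, b) ∈ p}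

def inDom (p : PP) (x : Ordinal.{0}) : Prop := ∃ b, (x, b) ∈ p

def np (p : PP) : Ordinal.{0} := sInf {x | ¬ inDom p x}

theorem inDom_of_lt_np {p : PP} {x : Ordinal} (h : x < np p) : inDom p x := by
  by_contra hc
  exact absurd (csInf_le (OrderBot.bddBelow _) (show x ∈ {y | ¬ inDom p y} from hc)) h.not_ge

theorem np_le_of_not_inDom {p : PP} {x : Ordinal} (h : ¬ inDom p x) : np p ≤ x :=
  csInf_le (OrderBot.bddBelow _) (show x ∈ {y | ¬ inDom p y} from h)

theorem not_inDom_np {p : PP} (hne : {x | ¬ inDom p x}.Nonempty) : ¬ inDom p (np p) :=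
  csInf_mem hne

theorem np_empty : np (∅ : PP) = 0 := by
  apply le_antisymm _ (zero_le (a := _))
  exact np_le_of_not_inDom (by rintro ⟨b, hb⟩; exact hb)

theorem not_inDom_of_bound {p : PP} {B : Ordinal} (hB : ∀ x ∈ p, x.1 < B) :
    ¬ inDom p B := by
  rintro ⟨b, hb⟩
  exact absurd (hB _ hb) (lt_irrefl _)

theorem np_le_np {p q : PP} (hpq : p ⊆ q) (hqne : ∃ x, ¬ inDom q x) : np p ≤ np q := by
  refine csInf_le_csInf (OrderBot.bddBelow _) hqne ?_
  intro x hx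
  exact fun hd => hx ⟨hd.choose, hpq hd.choose_spec⟩

theorem pval_agree {p q : PP} (hpq : p ⊆ q) (hq : Functional q) {x : Ordinal}
    (hx : inDom p x) : pval p x = pval q x := by
  obtain ⟨b, hb⟩ := hx
  have h1 : {b' | (x, b') ∈ p} = {b} := by
    ext b'
    exact ⟨fun h => hq x b' b (hpq h) (hpq hb), fun h => h ▸ hb⟩
  have h2 : {b' | (x, b') ∈ q} = {b} := by
    ext b'
    exact ⟨fun h => hq x b' b h (hpq hb), fun h => h ▸ hpq hb⟩
  rw [pval, pval, h1, h2]

theorem pval_mem {p : PP} {x : Ordinal} (hp : Functional p) (hx : inDom p x) :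
    (x, pval p x) ∈ p := by
  obtain ⟨b, hb⟩ := hx
  have h1 : {b' | (x, b') ∈ p} = {b} := by
    ext b'
    exact ⟨fun h => hp x b' b h hb, fun h => h ▸ hb⟩
  rw [pval, h1, csInf_singleton]
  exact hb

/-- The accumulator: reads the values of `p` at positions `j < min k (np p)` in order,
decoding each value via `h`, and accepting a decoded fragment iff it contains
everything accumulated so far. -/
def acc (h : Ordinal.{0} → PP) (p : PP) : Ordinal.{0} → PP :=
  WellFounded.fix Ordinal.lt_wf (fun k IH =>
    {x | ∃ j, ∃ hj : j < k, j < np p ∧ IH j hj ⊆ h (pval p j) ∧ x ∈ h (pval p j)})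

theorem acc_eq (h : Ordinal → PP) (p : PP) (k : Ordinal) :
    acc h p k = {x | ∃ j, j < k ∧ j < np p ∧ acc h p j ⊆ h (pval p j) ∧ x ∈ h (pval p j)} := by
  rw [acc, WellFounded.fix_eq]
  ext x
  exact ⟨fun ⟨j, hj, h2, h3, h4⟩ => ⟨j, hj, h2, h3, h4⟩,
    fun ⟨j, hj, h2, h3, h4⟩ => ⟨j, hj, h2, h3, h4⟩⟩

theorem acc_mono {h : Ordinal → PP} {p : PP} {k k' : Ordinal} (hk : k ≤ k') :
    acc h p k ⊆ acc h p k' := by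
  intro x hx
  rw [acc_eq] at hx ⊢
  obtain ⟨j, hj, h2, h3, h4⟩ := hx
  exact ⟨j, hj.trans_le hk, h2, h3, h4⟩

theorem acc_zero (h : Ordinal → PP) (p : PP) : acc h p 0 = ∅ := by
  rw [acc_eq]
  ext x
  simp only [Set.mem_setOf_eq, Set.mem_empty_iff_false, iff_false]
  rintro ⟨j, hj, -⟩
  exact (zero_le (a := j)).not_gt hj

theorem acc_empty (h : Ordinal → PP) : acc h (∅ : PP) (np (∅ : PP)) = ∅ := by
  rw [np_empty, acc_zero]

/-- fragments of accepted positions are linearly ordered by inclusion. -/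
theorem frag_sub {h : Ordinal → PP} {p : PP} {j j' : Ordinal} (hjj' : j < j')
    (hj : j < np p ∧ acc h p j ⊆ h (pval p j))
    (hj' : acc h p j' ⊆ h (pval p j')) :
    h (pval p j) ⊆ h (pval p j') := by
  intro x hx
  apply hj'
  rw [acc_eq]
  exact ⟨j, hjj', hj.1, hj.2, hx⟩

end

end EastonProjAux

namespace EastonProjAux

noncomputable section

theorem levy_empty {μc γ : Cardinal.{0}} (hμ : ℵ₀ ≤ μc) : IsLevyCond μc γ (∅ : PP) := by
  refine ⟨by simp, by simp, ?_⟩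
  rw [Set.image_empty]
  simpa using lt_of_lt_of_le Cardinal.aleph0_pos
    (by simpa using Cardinal.lift_le.{1}.mpr hμ)

theorem levy_functional {μc γ : Cardinal.{0}} {p : PP} (h : IsLevyCond μc γ p) :
    Functional p := h.2.1

theorem np_lt_ord {μc γ : Cardinal.{0}} {p : PP} (h : IsLevyCond μc γ p) :
    np p < μc.ord := by
  by_contra hc
  push_neg at hc
  have hall : ∀ x : Ordinal, x < μc.ord → inDom p x := fun x hx =>
    inDom_of_lt_np (hx.trans_le hc)
  have hinj : Cardinal.lift.{1} μc ≤ #(Prod.fst '' p) := by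
    rw [← Cardinal.card_ord μc, ← Ordinal.mk_Iio_ordinal]
    refine ⟨⟨fun x => ⟨x.1, ?_⟩, ?_⟩⟩
    · obtain ⟨b, hb⟩ := hall x.1 x.2
      exact ⟨(x.1, b), hb, rfl⟩
    · intro x y hxy
      exact Subtype.ext (by simpa using congrArg Subtype.val hxy)
  exact absurd h.2.2 hinj.not_gt

theorem not_inDom_ord {μc γ : Cardinal.{0}} {p : PP} (h : IsLevyCond μc γ p) :
    ¬ inDom p μc.ord :=
  not_inDom_of_bound (fun x hx => (h.1 x hx).1)

/-- Agreement: if `p ⊆ q` with `q` functional, the accumulators agree up to `np p`. -/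
theorem acc_agree {h : Ordinal → PP} {p q : PP} (hpq : p ⊆ q) (hq : Functional q)
    (hqne : ∃ x, ¬ inDom q x) : ∀ k, k ≤ np p → acc h p k = acc h q k := by
  intro k
  induction k using Ordinal.induction with
  | _ k IH =>
    intro hk
    have hnp : np p ≤ np q := np_le_np hpq hqne
    ext x
    rw [acc_eq, acc_eq]
    simp only [Set.mem_setOf_eq]
    constructor
    · rintro ⟨j, hjk, hjnp, hsub, hx⟩
      have hjp : j < np p := hjnp
      have hval : pval p j = pval q j := pval_agree hpq hq (inDom_of_lt_np hjp)
      have hacc : acc h p j = acc h q j := IH j hjk (le_of_lt hjp)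
      exact ⟨j, hjk, hjp.trans_le hnp, by rw [← hval, ← hacc]; exact hsub,
        by rw [← hval]; exact hx⟩
    · rintro ⟨j, hjk, _, hsub, hx⟩
      have hjp : j < np p := hjk.trans_le hk
      have hval : pval p j = pval q j := pval_agree hpq hq (inDom_of_lt_np hjp)
      have hacc : acc h p j = acc h q j := IH j hjk (le_of_lt hjp)
      exact ⟨j, hjk, hjp, by rw [hval, hacc]; exact hsub, by rw [hval]; exact hx⟩

theorem lift_isRegular {c : Cardinal.{0}} (h : c.IsRegular) :
    (Cardinal.lift.{1} c).IsRegular := by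
  constructor
  · exact le_trans (by simpa using Cardinal.lift_le.{1}.mpr h.1) le_rfl
  · rw [← Cardinal.lift_ord, ← Ordinal.lift_cof]
    exact Cardinal.lift_le.mpr h.2

/-- The accumulator is a Levy condition. -/
theorem acc_isLevy {μi γ : Cardinal.{0}} {h : Ordinal → PP} {p : PP} {k : Ordinal}
    (Hh : ∀ v, IsLevyCond μi γ (h v)) (hreg : μi.IsRegular) (hk : k.card < μi) :
    IsLevyCond μi γ (acc h p k) := by
  refine ⟨?_, ?_, ?_⟩
  · intro x hx
    rw [acc_eq] at hx
    obtain ⟨j, -, -, -, hx⟩ := hx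
    exact (Hh (pval p j)).1 x hx
  · intro a b b' hb hb'
    rw [acc_eq] at hb hb'
    obtain ⟨j, hjk, hjnp, hsub, hb⟩ := hb
    obtain ⟨j', hj'k, hj'np, hsub', hb'⟩ := hb'
    rcases lt_trichotomy j j' with hlt | heq | hgt
    · exact (Hh (pval p j')).2.1 a b b' (frag_sub hlt ⟨hjnp, hsub⟩ hsub' hb) hb'
    · subst heq
      exact (Hh (pval p j)).2.1 a b b' hb hb'
    · exact (Hh (pval p j)).2.1 a b b' hb (frag_sub hgt ⟨hj'np, hsub'⟩ hsub hb')
  · have hsub : Prod.fst '' acc h p k ⊆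
        ⋃ j : ↥(Set.Iio k), Prod.fst '' (h (pval p j.1)) := by
      rintro a ⟨x, hx, rfl⟩
      rw [acc_eq] at hx
      obtain ⟨j, hjk, -, -, hx⟩ := hx
      exact Set.mem_iUnion.mpr ⟨⟨j, hjk⟩, ⟨x, hx, rfl⟩⟩
    refine lt_of_le_of_lt (Cardinal.mk_le_mk_of_subset hsub) ?_
    refine lt_of_le_of_lt Cardinal.mk_iUnion_le_sum_mk ?_
    refine Cardinal.sum_lt_lift_of_isRegular.{1,1} (lift_isRegular hreg) ?_
      (fun j => (Hh (pval p j.1)).2.2)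
    rw [Ordinal.mk_Iio_ordinal, Cardinal.lift_lift]
    exact Cardinal.lift_lt.mpr hk

/-- The reach lemma: extending `p` with the marker `v` at position `np p`
makes the accumulator absorb `h v`. -/
theorem acc_reach {h : Ordinal → PP} {p : PP} {B : Ordinal}
    (hB : ∀ x ∈ p, x.1 < B) (hfun : Functional p) {v : Ordinal}
    (hv : acc h p (np p) ⊆ h v) :
    h v ⊆ acc h (p ∪ {(np p, v)}) (np (p ∪ {(np p, v)})) := by
  set p' := p ∪ {(np p, v)} with hp'
  have hnpB : np p ≤ B := np_le_of_not_inDom (not_inDom_of_bound hB)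
  have hnpfree : ¬ inDom p (np p) := not_inDom_np ⟨B, not_inDom_of_bound hB⟩
  have hfun' : Functional p' := by
    intro a b b' hb hb'
    rcases hb with hb | hb <;> rcases hb' with hb' | hb'
    · exact hfun a b b' hb hb'
    · rw [Set.mem_singleton_iff, Prod.mk.injEq] at hb'
      exact absurd ⟨b, hb'.1 ▸ hb⟩ hnpfree
    · rw [Set.mem_singleton_iff, Prod.mk.injEq] at hb
      exact absurd ⟨b', hb.1 ▸ hb'⟩ hnpfree
    · rw [Set.mem_singleton_iff, Prod.mk.injEq] at hb hb'
      rw [hb.2, hb'.2]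
  have hB' : ∀ x ∈ p', x.1 < Order.succ B := by
    rintro x (hx | hx)
    · exact (hB x hx).trans_le (Order.le_succ B)
    · rw [Set.mem_singleton_iff] at hx
      rw [hx]
      exact lt_of_le_of_lt hnpB (Order.lt_succ B)
  have hsubp' : p ⊆ p' := Set.subset_union_left
  have hnplt : np p < np p' := by
    rcases lt_or_ge (np p) (np p') with h1 | h1
    · exact h1
    · exfalso
      have : inDom p' (np p') := by
        rcases lt_or_eq_of_le h1 with h2 | h2
        · obtain ⟨b, hb⟩ := inDom_of_lt_np h2
          exact ⟨b, Or.inl hb⟩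
        · exact ⟨v, Or.inr (by rw [h2]; rfl)⟩
      exact absurd this (not_inDom_np ⟨Order.succ B, not_inDom_of_bound hB'⟩)
  have hagree : acc h p' (np p) = acc h p (np p) :=
    (acc_agree hsubp' hfun' ⟨Order.succ B, not_inDom_of_bound hB'⟩ (np p) le_rfl).symm
  have hvalnp : pval p' (np p) = v := by
    have h1 : {b | (np p, b) ∈ p'} = {v} := by
      ext b
      constructor
      · rintro (hb | hb)
        · exact absurd ⟨b, hb⟩ hnpfree
        · rw [Set.mem_singleton_iff, Prod.mk.injEq] at hb
          exact hb.2
      · rintro rfl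
        exact Or.inr rfl
    rw [pval, h1, csInf_singleton]
  intro x hx
  rw [acc_eq]
  exact ⟨np p, hnplt, hnplt, by rw [hvalnp, hagree]; exact hv, by rw [hvalnp]; exact hx⟩

end

end EastonProjAux

namespace EastonProjAux

noncomputable section

theorem exists_enum {μc γ : Cardinal.{0}} (hγ : StrongRegular γ) (hμ : μc.IsRegular)
    (hμγ : μc ≤ γ) :
    ∃ e : Ordinal.{0} → PP, (∀ v, IsLevyCond μc γ (e v)) ∧
      (∀ c, IsLevyCond μc γ c → ∃ v, v < γ.ord ∧ e v = c) := by
  classical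
  set T : PP := {x | x.1 < μc.ord ∧ x.2 < γ.ord} with hTdef
  have hℵμ : ℵ₀ ≤ Cardinal.lift.{1} μc := Cardinal.aleph0_le_lift.mpr hμ.1
  have hℵγ : ℵ₀ ≤ Cardinal.lift.{1} γ := Cardinal.aleph0_le_lift.mpr hγ.1.1
  have hTle : #(↥T) ≤ Cardinal.lift.{1} γ := by
    have h1 : #(↥T) ≤ #(↥(Set.Iio μc.ord) × ↥(Set.Iio γ.ord)) := by
      refine ⟨⟨fun x => (⟨x.1.1, x.2.1⟩, ⟨x.1.2, x.2.2⟩), ?_⟩⟩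
      intro x y hxy
      have h1 : x.1.1 = y.1.1 := congrArg (fun w => (w.1 : Ordinal)) hxy
      have h2 : x.1.2 = y.1.2 := congrArg (fun w => (w.2 : Ordinal)) hxy
      exact Subtype.ext (Prod.ext h1 h2)
    refine h1.trans ?_
    rw [Cardinal.mk_prod, Cardinal.lift_id, Cardinal.lift_id, Ordinal.mk_Iio_ordinal,
      Ordinal.mk_Iio_ordinal, Cardinal.card_ord, Cardinal.card_ord,
      Cardinal.mul_eq_max hℵμ hℵγ]
    exact max_le (Cardinal.lift_le.mpr hμγ) le_rfl
  have hC : #{c : PP // IsLevyCond μc γ c} ≤ Cardinal.lift.{1} γ := by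
    have key : ∀ c : {c : PP // IsLevyCond μc γ c}, ∃ o : Ordinal.{0}, o < μc.ord ∧
        #(↥c.1) ≤ Cardinal.lift.{1} o.card := by
      intro c
      have hlt : #(↥c.1) < Cardinal.lift.{1} μc := by
        refine lt_of_le_of_lt ?_ c.2.2.2
        refine ⟨⟨fun x => ⟨x.1.1, ⟨x.1, x.2, rfl⟩⟩, ?_⟩⟩
        intro x y hxy
        have h1 : x.1.1 = y.1.1 := congrArg Subtype.val hxy
        have h2 : x.1.2 = y.1.2 := c.2.2.1 x.1.1 x.1.2 y.1.2 x.2 (h1 ▸ y.2)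
        exact Subtype.ext (Prod.ext h1 h2)
      obtain ⟨κ, hκ, hlift⟩ := Cardinal.lt_lift_iff.mp hlt
      exact ⟨κ.ord, Cardinal.ord_lt_ord.mpr hκ,
        by rw [Cardinal.card_ord]; exact le_of_eq hlift.symm⟩
    choose o ho hole using key
    have hsub : ∀ c : {c : PP // IsLevyCond μc γ c}, c.1 ⊆ T := fun c x hx =>
      ⟨(c.2.1 x hx).1, (c.2.1 x hx).2⟩
    have hinj : #{c : PP // IsLevyCond μc γ c} ≤
        #(Σ j : ↥(Set.Iio μc.ord),
          {t : PP // t ⊆ T ∧ #(↥t) ≤ Cardinal.lift.{1} (j.1.card)}) := by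
      refine ⟨⟨fun c => ⟨⟨o c, ho c⟩, ⟨c.1, hsub c, hole c⟩⟩, ?_⟩⟩
      intro c c' h
      have h2 : c.1 = c'.1 := congrArg (fun x => (x.2.1 : PP)) h
      exact Subtype.ext h2
    refine hinj.trans ?_
    rw [Cardinal.mk_sigma]
    have hterm : ∀ j : ↥(Set.Iio μc.ord),
        #{t : PP // t ⊆ T ∧ #(↥t) ≤ Cardinal.lift.{1} (j.1.card)} ≤
          Cardinal.lift.{1} γ := by
      intro j
      refine le_trans (Cardinal.mk_bounded_subset_le T (Cardinal.lift.{1} j.1.card)) ?_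
      have hcard : j.1.card < γ := lt_of_lt_of_le (Cardinal.lt_ord.mp j.2) hμγ
      calc max #(↥T) ℵ₀ ^ (Cardinal.lift.{1} j.1.card)
          ≤ (Cardinal.lift.{1} γ) ^ (Cardinal.lift.{1} j.1.card) :=
            Cardinal.power_le_power_right (max_le hTle hℵγ)
        _ = Cardinal.lift.{1} (γ ^ j.1.card) := (Cardinal.lift_power _ _).symm
        _ ≤ Cardinal.lift.{1} (γ ^< γ) :=
            Cardinal.lift_le.mpr (Cardinal.le_powerlt γ hcard)
        _ = Cardinal.lift.{1} γ := by rw [hγ.2]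
    refine le_trans (Cardinal.sum_le_sum _ _ hterm) ?_
    rw [Cardinal.sum_const', Ordinal.mk_Iio_ordinal, Cardinal.card_ord,
      Cardinal.mul_eq_max hℵμ hℵγ]
    exact max_le (Cardinal.lift_le.mpr hμγ) le_rfl
  have hCle : #{c : PP // IsLevyCond μc γ c} ≤ #(↥(Set.Iio γ.ord)) := by
    rw [Ordinal.mk_Iio_ordinal, Cardinal.card_ord]; exact hC
  obtain ⟨emb⟩ := (Cardinal.le_def _ _).mp hCle
  haveI : Nonempty {c : PP // IsLevyCond μc γ c} := ⟨⟨∅, levy_empty hμ.1⟩⟩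
  set g : ↥(Set.Iio γ.ord) → {c : PP // IsLevyCond μc γ c} := Function.invFun emb with hg
  refine ⟨fun v => if hv : v < γ.ord then (g ⟨v, hv⟩).1 else ∅, ?_, ?_⟩
  · intro v
    by_cases hv : v < γ.ord
    · simp only [dif_pos hv]
      exact (g ⟨v, hv⟩).2
    · simp only [dif_neg hv]
      exact levy_empty hμ.1
  · intro c hc
    rcases hemb : emb ⟨c, hc⟩ with ⟨v0, hv0⟩
    refine ⟨v0, hv0, ?_⟩
    show (if hv : v0 < γ.ord then (g ⟨v0, hv⟩).1 else ∅) = c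
    rw [dif_pos (show v0 < γ.ord from hv0)]
    have h2 : g ⟨v0, hv0⟩ = ⟨c, hc⟩ := by
      rw [hg, ← hemb]
      exact Function.leftInverse_invFun emb.injective _
    rw [h2]

end

end EastonProjAux

namespace EastonProjAux

open scoped Classical

noncomputable section

def enum (μc γ : Cardinal.{0}) : Ordinal.{0} → PP :=
  if h : StrongRegular γ ∧ μc.IsRegular ∧ μc ≤ γ then
    (exists_enum h.1 h.2.1 h.2.2).choose else fun _ => ∅

theorem enum_levy {μc γ : Cardinal.{0}} (h1 : StrongRegular γ) (h2 : μc.IsRegular)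
    (h3 : μc ≤ γ) (v : Ordinal) : IsLevyCond μc γ (enum μc γ v) := by
  rw [enum, dif_pos (⟨h1, h2, h3⟩ : StrongRegular γ ∧ μc.IsRegular ∧ μc ≤ γ)]
  exact (exists_enum h1 h2 h3).choose_spec.1 v

theorem enum_surj {μc γ : Cardinal.{0}} (h1 : StrongRegular γ) (h2 : μc.IsRegular)
    (h3 : μc ≤ γ) {c : PP} (hc : IsLevyCond μc γ c) :
    ∃ v, v < γ.ord ∧ enum μc γ v = c := by
  rw [enum, dif_pos (⟨h1, h2, h3⟩ : StrongRegular γ ∧ μc.IsRegular ∧ μc ≤ γ)]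
  exact (exists_enum h1 h2 h3).choose_spec.2 c hc

def code (μc γ : Cardinal.{0}) (c : PP) : Ordinal.{0} :=
  if h : ∃ v, v < γ.ord ∧ enum μc γ v = c then h.choose else 0

theorem code_spec {μc γ : Cardinal.{0}} (h1 : StrongRegular γ) (h2 : μc.IsRegular)
    (h3 : μc ≤ γ) {c : PP} (hc : IsLevyCond μc γ c) :
    code μc γ c < γ.ord ∧ enum μc γ (code μc γ c) = c := by
  have h := enum_surj h1 h2 h3 hc
  rw [code, dif_pos h]
  exact ⟨h.choose_spec.1, h.choose_spec.2⟩

theorem functional_empty : Functional (∅ : PP) :=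
  fun _ _ _ hb _ => absurd hb (Set.notMem_empty _)

theorem np_lt_of {μ0c γ : Cardinal.{0}} {pg : PP}
    (hpg : pg = ∅ ∨ IsLevyCond μ0c γ pg) (hpos : 0 < μ0c) : np pg < μ0c.ord := by
  rcases hpg with rfl | hL
  · rw [np_empty]
    exact Cardinal.lt_ord.mpr (by simpa using hpos)
  · exact np_lt_ord hL

theorem extend_levy {μ0c γ : Cardinal.{0}} {pg : PP}
    (hpg : pg = ∅ ∨ IsLevyCond μ0c γ pg) (hμ0 : ℵ₀ ≤ μ0c) {v : Ordinal}
    (hv : v < γ.ord) : IsLevyCond μ0c γ (pg ∪ {(np pg, v)}) := by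
  have hpos : (0 : Cardinal) < μ0c := aleph0_pos.trans_le hμ0
  have hnp : np pg < μ0c.ord := np_lt_of hpg hpos
  have hnotin : ¬ inDom pg (np pg) := by
    rcases hpg with rfl | hL
    · rintro ⟨b, hb⟩; exact hb
    · exact not_inDom_np ⟨μ0c.ord, not_inDom_ord hL⟩
  refine ⟨?_, ?_, ?_⟩
  · rintro x (hx | hx)
    · rcases hpg with rfl | hL
      · exact absurd hx (Set.notMem_empty _)
      · exact hL.1 x hx
    · rw [Set.mem_singleton_iff] at hx
      rw [hx]
      exact ⟨hnp, hv⟩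
  · intro a b b' hb hb'
    rcases hb with hb | hb <;> rcases hb' with hb' | hb'
    · rcases hpg with rfl | hL
      · exact absurd hb (Set.notMem_empty _)
      · exact hL.2.1 a b b' hb hb'
    · rw [Set.mem_singleton_iff, Prod.mk.injEq] at hb'
      exact absurd ⟨b, hb'.1 ▸ hb⟩ hnotin
    · rw [Set.mem_singleton_iff, Prod.mk.injEq] at hb
      exact absurd ⟨b', hb.1 ▸ hb'⟩ hnotin
    · rw [Set.mem_singleton_iff, Prod.mk.injEq] at hb hb'
      rw [hb.2, hb'.2]
  · rw [Set.image_union, Set.image_singleton]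
    refine lt_of_le_of_lt (Cardinal.mk_union_le _ _) ?_
    have hℵ : ℵ₀ ≤ Cardinal.lift.{1} μ0c := Cardinal.aleph0_le_lift.mpr hμ0
    refine Cardinal.add_lt_of_lt hℵ ?_ ?_
    · rcases hpg with rfl | hL
      · rw [Set.image_empty]
        simpa using aleph0_pos.trans_le hℵ
      · exact hL.2.2
    · rw [Cardinal.mk_singleton]
      exact one_lt_aleph0.trans_le hℵ

open scoped Classical in
def proj (ζ : Ordinal.{0}) (μ ν : Ordinal.{0} → Cardinal.{0})
    (p : Cardinal.{0} → PP) (i : Ordinal.{0}) (γ : Cardinal.{0}) : PP :=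
  if i < ζ ∧ StrongRegular γ ∧ μ i ≤ γ ∧ γ < ν i then
    acc (enum (μ i) γ) (p γ) (np (p γ)) else ∅

end

end EastonProjAux


open EastonProjAux

/-- Lemma 2.4 of the paper: for increasing sequences `⟨μ i⟩`, `⟨ν i⟩` of regular
cardinals with `ζ < μ 0`, `μ i ≤ ν i < μ j` for `i < j < ζ`, and `λ ≥ sup ν i`, there is
a projection from `E(μ 0, λ)` to the full-support product `∏_{i<ζ} E(μ i, ν i)`. -/
theorem exists_projection_easton (ζ : Ordinal.{0}) (μ ν : Ordinal.{0} → Cardinal.{0})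
    (lam : Cardinal.{0})
    (hζ : ζ < (μ 0).ord)
    (hμreg : ∀ i < ζ, (μ i).IsRegular) (hνreg : ∀ i < ζ, (ν i).IsRegular)
    (hμν : ∀ i < ζ, μ i ≤ ν i)
    (hinc : ∀ i j, i < j → j < ζ → ν i < μ j)
    (hlam : ∀ i < ζ, ν i ≤ lam) :
    ∃ π : (Cardinal.{0} → Set (Ordinal × Ordinal)) →
          (Ordinal.{0} → Cardinal.{0} → Set (Ordinal × Ordinal)),
      (∀ p, IsEastonCond (μ 0) lam p → ∀ i < ζ, IsEastonCond (μ i) (ν i) (π p i)) ∧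
      (π (fun _ => ∅) = fun _ _ => ∅) ∧
      (∀ p q, IsEastonCond (μ 0) lam p → IsEastonCond (μ 0) lam q →
        (∀ γ, p γ ⊆ q γ) → ∀ i < ζ, ∀ γ, π p i γ ⊆ π q i γ) ∧
      (∀ p (q : Ordinal.{0} → Cardinal.{0} → Set (Ordinal × Ordinal)),
        IsEastonCond (μ 0) lam p →
        (∀ i < ζ, IsEastonCond (μ i) (ν i) (q i)) →
        (∀ i < ζ, ∀ γ, π p i γ ⊆ q i γ) →
        ∃ p', IsEastonCond (μ 0) lam p' ∧ (∀ γ, p γ ⊆ p' γ) ∧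
          ∀ i < ζ, ∀ γ, q i γ ⊆ π p' i γ) := by

  classical
  have hμ0le : ∀ i, i < ζ → μ 0 ≤ μ i := by
    intro i hi
    rcases eq_or_ne i 0 with rfl | h0
    · exact le_rfl
    · have h0i : (0 : Ordinal) < i := pos_iff_ne_zero.mpr h0
      exact le_of_lt (lt_of_le_of_lt (hμν 0 (h0i.trans hi)) (hinc 0 i h0i hi))
  have hμ0ℵ : ∀ i, i < ζ → ℵ₀ ≤ μ 0 := by
    intro i hi
    exact (hμreg 0 (lt_of_le_of_lt (zero_le (a := i)) hi)).1
  have hplevy : ∀ p, IsEastonCond (μ 0) lam p → ∀ γ : Cardinal.{0},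
      p γ = ∅ ∨ IsLevyCond (μ 0) γ (p γ) := by
    intro p hp γ
    rcases eq_or_ne (p γ) ∅ with h | h
    · exact Or.inl h
    · obtain ⟨h1, h2, h3⟩ := hp.1 γ h
      exact Or.inr (hp.2.1 γ h1 h2 h3)
  have hpfun : ∀ (pg : PP) (γ : Cardinal.{0}), (pg = ∅ ∨ IsLevyCond (μ 0) γ pg) →
      Functional pg := by
    rintro pg γ (rfl | hL)
    · exact functional_empty
    · exact hL.2.1
  refine ⟨proj ζ μ ν, ?_, ?_, ?_, ?_⟩
  -- Bullet 1 : Easton-ness of the projection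
  · intro p hp i hi
    refine ⟨?_, ?_, ?_⟩
    · intro γ hne
      by_cases h : i < ζ ∧ StrongRegular γ ∧ μ i ≤ γ ∧ γ < ν i
      · exact ⟨h.2.1, h.2.2.1, h.2.2.2⟩
      · rw [proj, if_neg h] at hne
        exact absurd rfl hne
    · intro γ h1 h2 h3
      rw [proj, if_pos ⟨hi, h1, h2, h3⟩]
      refine acc_isLevy (fun v => enum_levy h1 (hμreg i hi) h2 v) (hμreg i hi) ?_
      rcases hplevy p hp γ with h4 | h4
      · rw [h4, np_empty]
        simpa using aleph0_pos.trans_le (hμreg i hi).1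
      · have h5 := np_lt_ord h4
        rw [Cardinal.lt_ord] at h5
        exact lt_of_lt_of_le h5 (hμ0le i hi)
    · intro l hl hlν
      have hsub : {γ : Cardinal.{0} | γ < l ∧ proj ζ μ ν p i γ ≠ ∅} ⊆
          {γ : Cardinal.{0} | γ < l ∧ p γ ≠ ∅} := by
        rintro γ ⟨hγl, hne⟩
        refine ⟨hγl, ?_⟩
        intro h0
        apply hne
        rw [proj]
        split
        · rw [h0, acc_empty]
        · rfl
      exact lt_of_le_of_lt (Cardinal.mk_le_mk_of_subset hsub)
        (hp.2.2 l hl (hlν.trans (hlam i hi)))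
  -- Bullet 2 : image of the trivial condition
  · funext i γ
    rw [proj]
    split
    · exact acc_empty _
    · rfl
  -- Bullet 3 : monotonicity
  · intro p q hp hq hpq i hi γ
    by_cases h : i < ζ ∧ StrongRegular γ ∧ μ i ≤ γ ∧ γ < ν i
    · rw [proj, proj, if_pos h, if_pos h]
      rcases eq_or_ne (q γ) ∅ with hq0 | hq0
      · have hp0 : p γ = ∅ := Set.subset_empty_iff.mp (hq0 ▸ hpq γ)
        rw [hp0, hq0]
      · have hqlevy : IsLevyCond (μ 0) γ (q γ) := (hplevy q hq γ).resolve_left hq0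
        have hqne : ∃ x, ¬ inDom (q γ) x := ⟨(μ 0).ord, not_inDom_ord hqlevy⟩
        have hagree := acc_agree (h := enum (μ i) γ) (hpq γ) hqlevy.2.1 hqne
          (np (p γ)) le_rfl
        rw [hagree]
        exact acc_mono (np_le_np (hpq γ) hqne)
    · rw [proj, proj, if_neg h, if_neg h]
  -- Bullet 4 : the projection property
  · intro p q hp hq hπq
    have hrel : ∀ (γ : Cardinal.{0}) (hD : ∃ i, i < ζ ∧ q i γ ≠ ∅),
        StrongRegular γ ∧ μ hD.choose ≤ γ ∧ γ < ν hD.choose ∧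
          IsLevyCond (μ hD.choose) γ (q hD.choose γ) := by
      intro γ hD
      obtain ⟨hi, hne⟩ := hD.choose_spec
      obtain ⟨h1, h2, h3⟩ := (hq hD.choose hi).1 γ hne
      exact ⟨h1, h2, h3, (hq hD.choose hi).2.1 γ h1 h2 h3⟩
    have hcode : ∀ (γ : Cardinal.{0}) (hD : ∃ i, i < ζ ∧ q i γ ≠ ∅),
        code (μ hD.choose) γ (q hD.choose γ) < γ.ord ∧
          enum (μ hD.choose) γ (code (μ hD.choose) γ (q hD.choose γ)) = q hD.choose γ :=
      fun γ hD => code_spec (hrel γ hD).1 (hμreg _ hD.choose_spec.1) (hrel γ hD).2.1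
        (hrel γ hD).2.2.2
    set p' : Cardinal.{0} → PP := fun γ =>
      if hD : ∃ i, i < ζ ∧ q i γ ≠ ∅ then
        p γ ∪ {(np (p γ), code (μ hD.choose) γ (q hD.choose γ))} else p γ with hp'def
    have hsubp' : ∀ γ, p γ ⊆ p' γ := by
      intro γ
      by_cases hD : ∃ i, i < ζ ∧ q i γ ≠ ∅
      · simp only [hp'def, dif_pos hD]
        exact Set.subset_union_left
      · simp only [hp'def, dif_neg hD]
        exact subset_rfl
    refine ⟨p', ⟨?_, ?_, ?_⟩, hsubp', ?_⟩
    · -- clause 1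
      intro γ hne
      by_cases hD : ∃ i, i < ζ ∧ q i γ ≠ ∅
      · exact ⟨(hrel γ hD).1, le_trans (hμ0le _ hD.choose_spec.1) (hrel γ hD).2.1,
          lt_of_lt_of_le (hrel γ hD).2.2.1 (hlam _ hD.choose_spec.1)⟩
      · simp only [hp'def, dif_neg hD] at hne
        exact hp.1 γ hne
    · -- clause 2
      intro γ h1 h2 h3
      by_cases hD : ∃ i, i < ζ ∧ q i γ ≠ ∅
      · simp only [hp'def, dif_pos hD]
        exact extend_levy (hplevy p hp γ) (hμ0ℵ _ hD.choose_spec.1) (hcode γ hD).1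
      · simp only [hp'def, dif_neg hD]
        exact hp.2.1 γ h1 h2 h3
    · -- clause 3
      intro l hl hll
      by_cases hlμ : l ≤ μ 0
      · have hE : IsEmpty {γ : Cardinal.{0} // γ < l ∧ p' γ ≠ ∅} := by
          refine ⟨fun x => ?_⟩
          obtain ⟨γ, hγl, hne⟩ := x
          have hγμ : μ 0 ≤ γ := by
            by_cases hD : ∃ i, i < ζ ∧ q i γ ≠ ∅
            · exact le_trans (hμ0le _ hD.choose_spec.1) (hrel γ hD).2.1
            · simp only [hp'def, dif_neg hD] at hne
              exact (hp.1 γ hne).2.1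
          exact absurd (hγl.trans_le (hlμ.trans hγμ)) (lt_irrefl γ)
        haveI := hE
        rw [Cardinal.mk_eq_zero]
        exact aleph0_pos.trans_le (Cardinal.aleph0_le_lift.mpr hl.1)
      · push_neg at hlμ
        have hsub : {γ : Cardinal.{0} | γ < l ∧ p' γ ≠ ∅} ⊆
            {γ : Cardinal.{0} | γ < l ∧ p γ ≠ ∅} ∪
              ⋃ j : ↥(Set.Iio ζ), {γ : Cardinal.{0} | γ < l ∧ q j.1 γ ≠ ∅} := by
          rintro γ ⟨hγl, hne⟩
          by_cases hD : ∃ i, i < ζ ∧ q i γ ≠ ∅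
          · exact Or.inr (Set.mem_iUnion.mpr ⟨⟨hD.choose, hD.choose_spec.1⟩, hγl,
              hD.choose_spec.2⟩)
          · refine Or.inl ⟨hγl, ?_⟩
            simp only [hp'def, dif_neg hD] at hne
            exact hne
        refine lt_of_le_of_lt (Cardinal.mk_le_mk_of_subset hsub) ?_
        refine lt_of_le_of_lt (Cardinal.mk_union_le _ _) ?_
        refine Cardinal.add_lt_of_lt (Cardinal.aleph0_le_lift.mpr hl.1)
          (hp.2.2 l hl hll) ?_
        refine lt_of_le_of_lt Cardinal.mk_iUnion_le_sum_mk ?_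
        refine Cardinal.sum_lt_lift_of_isRegular.{1,1} (lift_isRegular hl) ?_ ?_
        · rw [Ordinal.mk_Iio_ordinal, Cardinal.lift_lift]
          exact Cardinal.lift_lt.mpr (lt_trans (Cardinal.lt_ord.mp hζ) hlμ)
        · intro j
          rcases le_or_gt l (ν j.1) with hlv | hlv
          · exact (hq j.1 j.2).2.2 l hl hlv
          · have hsub2 : {γ : Cardinal.{0} | γ < l ∧ q j.1 γ ≠ ∅} ⊆
                {γ : Cardinal.{0} | γ < ν j.1 ∧ q j.1 γ ≠ ∅} := by
              rintro γ ⟨-, hne⟩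
              exact ⟨((hq j.1 j.2).1 γ hne).2.2, hne⟩
            exact lt_of_le_of_lt (Cardinal.mk_le_mk_of_subset hsub2)
              (lt_trans ((hq j.1 j.2).2.2 (ν j.1) (hνreg j.1 j.2) le_rfl)
                (Cardinal.lift_lt.mpr hlv))
    · -- reach
      intro i hi γ
      rcases eq_or_ne (q i γ) ∅ with hq0 | hq0
      · rw [hq0]
        exact Set.empty_subset _
      · have hD : ∃ i', i' < ζ ∧ q i' γ ≠ ∅ := ⟨i, hi, hq0⟩
        obtain ⟨h1', h2', h3'⟩ := (hq i hi).1 γ hq0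
        have hii : hD.choose = i := by
          obtain ⟨h1, h2, h3, h4⟩ := hrel γ hD
          rcases lt_trichotomy hD.choose i with hlt | heq | hgt
          · exact absurd ((h3.trans_le (le_of_lt (hinc _ _ hlt hi))).trans_le h2')
              (lt_irrefl γ)
          · exact heq
          · exact absurd ((h3'.trans_le (le_of_lt
              (hinc i hD.choose hgt hD.choose_spec.1))).trans_le h2) (lt_irrefl γ)
        rw [proj, if_pos ⟨hi, h1', h2', h3'⟩]
        have hp'γ : p' γ = p γ ∪ {(np (p γ), code (μ i) γ (q i γ))} := by
          simp only [hp'def, dif_pos hD, hii]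
        rw [hp'γ]
        have hbound : ∀ x ∈ p γ, x.1 < (μ 0).ord := by
          rcases hplevy p hp γ with h | h
          · rw [h]
            intro x hx
            exact absurd hx (Set.notMem_empty x)
          · exact fun x hx => (h.1 x hx).1
        have hfun : Functional (p γ) := hpfun (p γ) γ (hplevy p hp γ)
        have hcs := code_spec h1' (hμreg i hi) h2' ((hq i hi).2.1 γ h1' h2' h3')
        have hvsub : acc (enum (μ i) γ) (p γ) (np (p γ)) ⊆
            enum (μ i) γ (code (μ i) γ (q i γ)) := by
          rw [hcs.2]
          have h5 := hπq i hi γ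
          rw [proj, if_pos ⟨hi, h1', h2', h3'⟩] at h5
          exact h5
        have hfin := acc_reach hbound hfun hvsub
        conv_lhs => rw [← hcs.2]
        exact hfin
end

section
/- Let μ < ν be cardinals with μ regular and ν Mahlo. Then the Easton collapse E(μ, ν) is ν-Knaster: for every subset A ⊆ E(μ, ν) with |A| = ν there exists B ⊆ A with |B| = ν such that any two elements of B are compatible (have a common lower bound in E(μ, ν)). -/
/-- A cardinal `ν` is Mahlo if it is strongly inaccessible and the set of strongly
inaccessible cardinals below `ν` is stationary in `ν`. -/
def IsMahlo (ν : Cardinal.{0}) : Prop :=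
  ν.IsInaccessible ∧
    IsStationaryIn
      {α : Ordinal | α < ν.ord ∧ ∃ c : Cardinal.{0}, c.ord = α ∧ c.IsInaccessible}
      ν.ord

open scoped Cardinal

theorem EK.isRegular_lift {ν : Cardinal.{0}} (h : ν.IsRegular) :
    (Cardinal.lift.{1} ν).IsRegular := by
  constructor
  · rw [← Cardinal.lift_aleph0.{1,0}]; exact Cardinal.lift_le.2 h.1
  · rw [← Cardinal.lift_ord, ← Ordinal.lift_cof]; exact Cardinal.lift_le.2 h.2

theorem EK.sSup_lt_ord {c : Cardinal.{0}} (hc : c.IsRegular) {S : Set Ordinal.{0}}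
    (hS : ∀ x ∈ S, x < c.ord) (hmk : Cardinal.mk S < Cardinal.lift.{1} c) :
    sSup S < c.ord := by
  rcases S.eq_empty_or_nonempty with rfl | hne
  · rw [csSup_empty]
    have : c.ord ≠ 0 := by
      rw [ne_eq, Cardinal.ord_eq_zero]
      rintro rfl
      exact (Cardinal.aleph0_pos.trans_le hc.1).ne' rfl
    exact bot_lt_iff_ne_bot.mpr (by simpa [Ordinal.bot_eq_zero] using this)
  · set e := Ordinal.ToType.mk (o := c.ord)
    set ι := {x : c.ord.ToType // (e.symm x : Ordinal) ∈ S} with hι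
    have hequiv : S ≃ ULift.{1} ι := by
      refine ⟨fun x => ⟨⟨e ⟨x.1, hS x.1 x.2⟩, by simp⟩⟩, fun i => ⟨(e.symm i.1.1 : Ordinal), i.1.2⟩,
        fun x => ?_, fun i => ?_⟩
      · ext; simp
      · ext; simp
        exact (congrArg e (Subtype.coe_eta _ _)).trans (e.apply_symm_apply _)
    have hcard : Cardinal.mk ι < c := by
      have : Cardinal.mk S = Cardinal.lift.{1} (Cardinal.mk ι) := by
        rw [Cardinal.mk_congr hequiv, Cardinal.mk_uLift]
      rw [this, Cardinal.lift_lt] at hmk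
      exact hmk
    have hsup : (⨆ i : ι, ((e.symm i.1 : Set.Iio c.ord) : Ordinal)) < c.ord := by
      apply Ordinal.iSup_lt_ord (by rwa [hc.cof_eq])
      exact fun i => (e.symm i.1).2
    refine lt_of_le_of_lt (csSup_le hne ?_) hsup
    intro x hx
    have : x = ((e.symm (e ⟨x, hS x hx⟩) : Set.Iio c.ord) : Ordinal) := by simp
    rw [this]
    exact le_ciSup (Ordinal.bddAbove_range _) (⟨e ⟨x, hS x hx⟩, by simp [hx]⟩ : ι)

theorem EK.mk_of_unbounded {ν : Cardinal.{0}} (hν : ν.IsRegular) {S : Set Ordinal.{0}}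
    (h1 : ∀ x ∈ S, x < ν.ord) (h2 : ∀ θ < ν.ord, ∃ x ∈ S, θ ≤ x) :
    Cardinal.mk S = Cardinal.lift.{1} ν := by
  have hle : Cardinal.mk S ≤ Cardinal.lift.{1} ν := by
    have : S ⊆ Set.Iio ν.ord := fun x hx => h1 x hx
    refine (Cardinal.mk_le_mk_of_subset this).trans_eq ?_
    rw [Ordinal.mk_Iio_ordinal, Cardinal.card_ord]
  refine hle.antisymm ?_
  by_contra hlt
  rw [not_le] at hlt
  have hsup := EK.sSup_lt_ord hν h1 hlt
  have hlim := Cardinal.isSuccLimit_ord hν.1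
  obtain ⟨x, hxS, hxge⟩ := h2 (sSup S + 1) (by
    rw [Ordinal.add_one_eq_succ]; exact hlim.succ_lt hsup)
  have : x ≤ sSup S := le_csSup ⟨ν.ord, fun y hy => (h1 y hy).le⟩ hxS
  rw [Ordinal.add_one_eq_succ, Order.succ_le_iff] at hxge
  exact absurd this (not_le.2 hxge)

theorem EK.weak_fodor {ν : Cardinal.{0}} (hν : ν.IsRegular) (hℵ : ℵ₀ < ν)
    {T : Set Ordinal} (hT : IsStationaryIn T ν.ord)
    (hTlim : ∀ α ∈ T, Order.IsSuccLimit α)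
    {f : Ordinal → Ordinal} (hf : ∀ α ∈ T, f α < α) :
    ∃ β < ν.ord, ∀ θ < ν.ord, ∃ α ∈ T, f α < β ∧ θ ≤ α := by
  by_contra hcon
  push_neg at hcon
  -- hcon : ∀ β < ν.ord, ∃ θ < ν.ord, ∀ α ∈ T, f α < β → α < θ  (roughly)
  classical
  set h : Ordinal → Ordinal := fun β =>
    if hb : β < ν.ord then (hcon β hb).choose else 0 with hdef
  have hprop : ∀ β < ν.ord, h β < ν.ord ∧ ∀ α ∈ T, f α < β → α < h β := by
    intro β hb
    have := (hcon β hb).choose_spec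
    simp only [hdef, dif_pos hb]
    exact ⟨this.1, fun α hα hfα => (this.2 α hα hfα)⟩
  have hbded : ∀ β, h β < ν.ord := by
    intro β
    by_cases hb : β < ν.ord
    · exact (hprop β hb).1
    · simp only [hdef, dif_neg hb]
      exact pos_iff_ne_zero.2 (by
        rw [ne_eq, Cardinal.ord_eq_zero]
        rintro rfl
        exact (Cardinal.aleph0_pos.trans_le hν.1).ne' rfl)
  set C : Set Ordinal := {θ | Order.IsSuccLimit θ ∧ θ < ν.ord ∧ ∀ β < θ, h β ≤ θ} with hC
  have hclub : IsClubIn C ν.ord := by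
    refine ⟨fun θ hθ => hθ.2.1, ?_, ?_⟩
    · -- unbounded
      intro θ₀ hθ₀
      set seq : ℕ → Ordinal := fun n => Nat.rec θ₀
        (fun _ s => max (s + 1) (sSup (h '' Set.Iio s))) n with hseq
      have hbdd : ∀ s : Ordinal, BddAbove (h '' Set.Iio s) :=
        fun s => ⟨ν.ord, fun y ⟨b, _, hb⟩ => hb ▸ (hbded b).le⟩
      have hseqlt : ∀ n, seq n < ν.ord := by
        intro n
        induction n with
        | zero => exact hθ₀
        | succ n ih =>
          refine max_lt ?_ ?_
          · rw [Ordinal.add_one_eq_succ]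
            exact (Cardinal.isSuccLimit_ord hν.1).succ_lt ih
          · refine EK.sSup_lt_ord hν (fun y ⟨b, _, hb⟩ => hb ▸ hbded b) ?_
            refine lt_of_le_of_lt (Cardinal.mk_image_le) ?_
            refine lt_of_eq_of_lt (Ordinal.mk_Iio_ordinal _) ?_
            rw [Cardinal.lift_lt]
            exact Cardinal.lt_ord.1 ih
      have hmono : ∀ n, seq n < seq (n + 1) := by
        intro n
        refine lt_of_lt_of_le ?_ (le_max_left _ _)
        rw [Ordinal.add_one_eq_succ]; exact Order.lt_succ _
      set θ := ⨆ n, seq n with hθ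
      have hθlt : θ < ν.ord := by
        refine Ordinal.iSup_lt_ord ?_ hseqlt
        rw [Cardinal.mk_nat]
        rwa [hν.cof_eq]
      have hle : ∀ n, seq n ≤ θ := fun n => le_ciSup (Ordinal.bddAbove_range _) n
      have hbelow : ∀ b, b < θ → ∃ n, b < seq n := by
        intro b hb
        by_contra hcb
        push_neg at hcb
        exact absurd (ciSup_le hcb) (not_le.2 hb)
      refine ⟨θ, ⟨?_, hθlt, ?_⟩, (hle 0)⟩
      · refine Ordinal.isSuccLimit_iff.2 ⟨?_, Order.isSuccPrelimit_of_succ_lt ?_⟩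
        · intro h0
          have h1 : seq 0 < θ := lt_of_lt_of_le (hmono 0) (hle 1)
          rw [h0] at h1
          exact absurd h1 (not_lt_of_ge zero_le)
        · intro b hb
          obtain ⟨n, hn⟩ := hbelow b hb
          refine lt_of_le_of_lt (Order.succ_le_of_lt hn) ?_
          exact lt_of_lt_of_le (hmono n) (hle (n+1))
      · intro β hβ
        obtain ⟨n, hn⟩ := hbelow β hβ
        refine le_trans ?_ (hle (n+1))
        refine le_trans (le_csSup (hbdd (seq n)) ⟨β, hn, rfl⟩) (le_max_right _ _)
    · -- closed
      intro x hx hne hsup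
      by_cases hmem : sSup x ∈ x
      · exact hx hmem
      have hbddx : BddAbove x := ⟨ν.ord, fun y hy => ((hx hy).2.1).le⟩
      have hlt : ∀ γ ∈ x, γ < sSup x := by
        intro γ hγ
        exact lt_of_le_of_ne (le_csSup hbddx hγ) (fun hh => hmem (hh ▸ hγ))
      have hex : ∀ b < sSup x, ∃ γ ∈ x, b < γ := by
        intro b hb
        by_contra hcb
        push_neg at hcb
        exact absurd (csSup_le hne hcb) (not_le.2 hb)
      refine ⟨Ordinal.isSuccLimit_iff.2 ⟨?_, Order.isSuccPrelimit_of_succ_lt ?_⟩, hsup, ?_⟩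
      · obtain ⟨γ, hγ⟩ := hne
        intro h0
        exact (Ordinal.isSuccLimit_iff.1 (hx hγ).1).1 (nonpos_iff_eq_zero.1 (h0 ▸ (le_csSup hbddx hγ)) )
      · intro b hb
        obtain ⟨γ, hγx, hγ⟩ := hex b hb
        exact lt_of_lt_of_le (((hx hγx).1).succ_lt hγ) (hlt γ hγx).le
      · intro β hβ
        obtain ⟨γ, hγx, hγ⟩ := hex β hβ
        exact le_trans ((hx hγx).2.2 β hγ) (le_csSup hbddx hγx)
  obtain ⟨α, hαT, hαC⟩ := hT.2 C hclub
  have hαlim := hTlim α hαT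
  have hβ : f α + 1 < α := by
    rw [Ordinal.add_one_eq_succ]; exact hαlim.succ_lt (hf α hαT)
  have hβν : f α + 1 < ν.ord := hβ.trans (hT.1 α hαT)
  have h1 := (hprop _ hβν).2 α hαT (by rw [Ordinal.add_one_eq_succ]; exact Order.lt_succ _)
  exact absurd (hαC.2.2 _ hβ) (not_le.2 h1)

/-- Part of Lemma 2.5 (Shioya): for `μ` regular and `ν` Mahlo, the Easton collapse
`E(μ, ν)` is `ν`-Knaster: every set of `ν` many conditions has a subset of size `ν`
whose elements are pairwise compatible. -/
theorem easton_knaster (μ ν : Cardinal.{0})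
    (hμ : μ.IsRegular) (hν : IsMahlo ν) (hμν : μ < ν) :
    ∀ A : Set (Cardinal.{0} → Set (Ordinal × Ordinal)),
      (∀ p ∈ A, IsEastonCond μ ν p) → Cardinal.mk ↥A = Cardinal.lift.{1} ν →
      ∃ B ⊆ A, Cardinal.mk ↥B = Cardinal.lift.{1} ν ∧
        ∀ p ∈ B, ∀ q ∈ B, ∃ r, IsEastonCond μ ν r ∧
          (∀ γ, p γ ⊆ r γ) ∧ (∀ γ, q γ ⊆ r γ) := by
  classical
  intro A hA hAcard
  obtain ⟨hInN, -, hSL⟩ := hν.1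
  have hreg := hν.1.isRegular
  have haleph : ℵ₀ ≤ ν := hInN.le
  have hνlim : Order.IsSuccLimit ν.ord := Cardinal.isSuccLimit_ord haleph
  -- enumeration
  have hIioCard : Cardinal.mk ↥(Set.Iio ν.ord) = Cardinal.lift.{1} ν := by
    rw [Ordinal.mk_Iio_ordinal, Cardinal.card_ord]
  obtain ⟨e⟩ : Nonempty (↥(Set.Iio ν.ord) ≃ ↥A) :=
    Cardinal.eq.1 (hIioCard.trans hAcard.symm)
  set p : Ordinal → (Cardinal.{0} → Set (Ordinal × Ordinal)) := fun α =>
    if h : α < ν.ord then (e ⟨α, h⟩ : Cardinal.{0} → Set (Ordinal × Ordinal)) else fun _ => ∅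
    with hp
  have hpA : ∀ α, α < ν.ord → p α ∈ A := by
    intro α h
    simp only [hp, dif_pos h]
    exact (e ⟨α, h⟩).2
  have hpcond : ∀ α, α < ν.ord → IsEastonCond μ ν (p α) := fun α h => hA _ (hpA α h)
  have hpinj : ∀ α α', α < ν.ord → α' < ν.ord → p α = p α' → α = α' := by
    intro α α' h h' heq
    simp only [hp, dif_pos h, dif_pos h'] at heq
    have := e.injective (Subtype.ext heq)
    exact congrArg Subtype.val this
  -- the stationary set
  set T : Set Ordinal :=
    {α : Ordinal | α < ν.ord ∧ ∃ c : Cardinal.{0}, c.ord = α ∧ c.IsInaccessible} with hTdef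
  have hTlim : ∀ α ∈ T, Order.IsSuccLimit α := by
    rintro α ⟨hαν, c, rfl, hc⟩
    exact Cardinal.isSuccLimit_ord hc.1.le
  -- the regressive function
  set f : Ordinal → Ordinal := fun α =>
    sSup {x | ∃ γ : Cardinal.{0}, γ.ord < α ∧ p α γ ≠ ∅ ∧ x = γ.ord + 1} with hfdef
  have hfmem : ∀ α < ν.ord, ∀ γ : Cardinal.{0}, γ.ord < α → p α γ ≠ ∅ → γ.ord + 1 ≤ f α := by
    intro α hα γ hγ hne
    refine le_csSup ⟨α, ?_⟩ ⟨γ, hγ, hne, rfl⟩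
    rintro x ⟨γ', hγ', _, rfl⟩
    rw [Ordinal.add_one_eq_succ, Order.succ_le_iff]
    exact hγ'
  have hfreg : ∀ α ∈ T, f α < α := by
    rintro α ⟨hαν, c, rfl, hc⟩
    have hcν : c < ν := Cardinal.ord_lt_ord.1 hαν
    have hclim : Order.IsSuccLimit c.ord := Cardinal.isSuccLimit_ord hc.1.le
    have hset : {x | ∃ γ : Cardinal.{0}, γ.ord < c.ord ∧ p c.ord γ ≠ ∅ ∧ x = γ.ord + 1}
        = (fun γ : Cardinal.{0} => γ.ord + 1) '' {γ | γ < c ∧ p c.ord γ ≠ ∅} := by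
      ext x
      constructor
      · rintro ⟨γ, hγ, hne, rfl⟩
        exact ⟨γ, ⟨Cardinal.ord_lt_ord.1 hγ, hne⟩, rfl⟩
      · rintro ⟨γ, ⟨hγ, hne⟩, rfl⟩
        exact ⟨γ, Cardinal.ord_lt_ord.2 hγ, hne, rfl⟩
    refine EK.sSup_lt_ord hc.isRegular ?_ ?_
    · rintro x ⟨γ, hγ, _, rfl⟩
      rw [Ordinal.add_one_eq_succ]
      exact hclim.succ_lt hγ
    · rw [hset]
      refine lt_of_le_of_lt Cardinal.mk_image_le ?_
      have h3 := (hpcond c.ord hαν).2.2 c hc.isRegular hcν.le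
      exact h3
  -- weak Fodor
  obtain ⟨β₀, hβ₀ν, hU₀⟩ := EK.weak_fodor hreg hInN hν.2 hTlim hfreg
  set β : Ordinal := max β₀ (μ.ord + 1) with hβdef
  have hμβ : μ.ord < β := lt_of_lt_of_le (by
    rw [Ordinal.add_one_eq_succ]; exact Order.lt_succ _) (le_max_right _ _)
  have hβν : β < ν.ord := by
    refine max_lt hβ₀ν ?_
    rw [Ordinal.add_one_eq_succ]
    exact hνlim.succ_lt (Cardinal.ord_lt_ord.2 hμν)
  set U : Set Ordinal := {α | α ∈ T ∧ f α < β} with hUdef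
  have hUsub : ∀ α ∈ U, α < ν.ord := fun α hα => hν.2.1 α hα.1
  have hUunb : ∀ θ < ν.ord, ∃ x ∈ U, θ ≤ x := by
    intro θ hθ
    obtain ⟨α, hαT, hfα, hθα⟩ := hU₀ θ hθ
    exact ⟨α, ⟨hαT, lt_of_lt_of_le hfα (le_max_left _ _)⟩, hθα⟩
  have hUcard : Cardinal.mk ↥U = Cardinal.lift.{1} ν := EK.mk_of_unbounded hreg hUsub hUunb
  -- encoding of lower parts
  set E : Type 1 := {γ : Cardinal.{0} // γ.ord < β} ×
    ({a : Ordinal.{0} // a < β} × {b : Ordinal.{0} // b < β}) with hEdef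
  set EncF : Ordinal → Set E := fun α => {t | (t.2.1.1, t.2.2.1) ∈ p α t.1.1} with hEncdef
  have hEnc : ∀ α α', α < ν.ord → EncF α = EncF α' →
      ∀ γ : Cardinal.{0}, γ.ord < β → ∀ a b : Ordinal,
        (a, b) ∈ p α γ → (a, b) ∈ p α' γ := by
    intro α α' hα henc γ hγ a b hab
    have hne : p α γ ≠ ∅ := by
      intro h; rw [h] at hab; exact hab
    obtain ⟨hSR, hμγ, hγν⟩ := (hpcond α hα).1 γ hne
    have hlevy := (hpcond α hα).2.1 γ hSR hμγ hγν
    obtain ⟨ha, hb⟩ := hlevy.1 (a, b) hab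
    have hab2 : a < β := ha.trans hμβ
    have hbb : b < β := hb.trans hγ
    have ht : (⟨⟨γ, hγ⟩, ⟨a, hab2⟩, ⟨b, hbb⟩⟩ : E) ∈ EncF α := hab
    rw [henc] at ht
    exact ht
  have hEncEq : ∀ α α', α < ν.ord → α' < ν.ord → EncF α = EncF α' →
      ∀ γ : Cardinal.{0}, γ.ord < β → p α γ = p α' γ := by
    intro α α' hα hα' henc γ hγ
    ext x
    cases x with
    | mk a b =>
      exact ⟨fun h => hEnc α α' hα henc γ hγ a b h,
        fun h => hEnc α' α hα' henc.symm γ hγ a b h⟩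
  -- cardinality of the encoding space
  have hSetE : Cardinal.mk (Set E) < Cardinal.lift.{1} ν := by
    set b' : Cardinal.{0} := max β.card ℵ₀ with hb'def
    have hb'ℵ : ℵ₀ ≤ b' := le_max_right _ _
    have hb'ν : b' < ν := max_lt (Cardinal.lt_ord.1 hβν) hInN
    have h2 : Cardinal.mk {a : Ordinal.{0} // a < β} = Cardinal.lift.{1} β.card :=
      Ordinal.mk_Iio_ordinal β
    have h1 : Cardinal.mk {γ : Cardinal.{0} // γ.ord < β} ≤ Cardinal.lift.{1} β.card := by
      rw [← h2]
      refine Cardinal.mk_le_of_injective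
        (f := fun γ => (⟨γ.1.ord, γ.2⟩ : {a : Ordinal.{0} // a < β})) ?_
      intro x x' hxx
      have := congrArg Subtype.val hxx
      exact Subtype.ext (Cardinal.ord_injective this)
    have hE1 : Cardinal.mk E ≤ Cardinal.lift.{1} b' := by
      have hmul : Cardinal.mk E = Cardinal.mk {γ : Cardinal.{0} // γ.ord < β} *
          (Cardinal.mk {a : Ordinal.{0} // a < β} * Cardinal.mk {b : Ordinal.{0} // b < β}) := by
        rw [hEdef]
        simp only [Cardinal.mk_prod, Cardinal.lift_id]
      rw [hmul, h2]
      have hle : Cardinal.lift.{1} β.card ≤ Cardinal.lift.{1} b' :=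
        Cardinal.lift_le.2 (le_max_left _ _)
      refine le_trans (mul_le_mul' (h1.trans hle) (mul_le_mul' hle hle)) ?_
      rw [← Cardinal.lift_mul, ← Cardinal.lift_mul,
        Cardinal.mul_eq_self hb'ℵ, Cardinal.mul_eq_self hb'ℵ]
    calc Cardinal.mk (Set E) = 2 ^ Cardinal.mk E := Cardinal.mk_set
      _ ≤ 2 ^ Cardinal.lift.{1} b' := by
          exact Cardinal.power_le_power_left two_ne_zero hE1
      _ = Cardinal.lift.{1} (2 ^ b') := (Cardinal.lift_two_power b').symm
      _ < Cardinal.lift.{1} ν := Cardinal.lift_lt.2 (hSL hb'ν)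
  -- pigeonhole
  obtain ⟨y, hy⟩ : ∃ y : Set E, Cardinal.mk {x : ↥U // EncF x.1 = y} = Cardinal.lift.{1} ν := by
    by_contra hcon
    push_neg at hcon
    have hlt : ∀ y : Set E, Cardinal.mk {x : ↥U // EncF x.1 = y} < Cardinal.lift.{1} ν := by
      intro y
      refine lt_of_le_of_ne ?_ (hcon y)
      exact le_trans (Cardinal.mk_subtype_le _) hUcard.le
    have : Cardinal.mk ↥U < Cardinal.lift.{1} ν := by
      have hsig := Cardinal.mk_congr (Equiv.sigmaFiberEquiv (fun x : ↥U => EncF x.1)).symm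
      rw [hsig, Cardinal.mk_sigma]
      exact Cardinal.sum_lt_of_isRegular (EK.isRegular_lift hreg) hSetE hlt
    exact absurd hUcard this.ne
  set U' : Set Ordinal := {α | α ∈ U ∧ EncF α = y} with hU'def
  have hU'sub : ∀ α ∈ U', α < ν.ord := fun α hα => hUsub α hα.1
  have hU'card : Cardinal.mk ↥U' = Cardinal.lift.{1} ν := by
    rw [← hy]
    exact Cardinal.mk_congr ⟨fun z => ⟨⟨z.1, z.2.1⟩, z.2.2⟩, fun x => ⟨x.1.1, x.1.2, x.2⟩,
      fun z => rfl, fun x => rfl⟩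
  have hU'unb : ∀ θ < ν.ord, ∃ x ∈ U', θ ≤ x := by
    intro θ hθ
    by_contra hcb
    push_neg at hcb
    have hsub2 : U' ⊆ Set.Iio θ := fun x hx => hcb x hx
    have := (Cardinal.mk_le_mk_of_subset hsub2).trans_eq
      (Ordinal.mk_Iio_ordinal θ)
    rw [hU'card] at this
    have hlt : Cardinal.lift.{1} ν < Cardinal.lift.{1} ν :=
      lt_of_le_of_lt this (Cardinal.lift_lt.2 (Cardinal.lt_ord.1 hθ))
    exact hlt.false
  -- the global support bound function
  set g : Ordinal → Ordinal := fun α =>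
    sSup {x | ∃ γ : Cardinal.{0}, p α γ ≠ ∅ ∧ x = γ.ord + 1} with hgdef
  have hgel : ∀ α < ν.ord, ∀ x ∈ {x | ∃ γ : Cardinal.{0}, p α γ ≠ ∅ ∧ x = γ.ord + 1},
      x < ν.ord := by
    rintro α hα x ⟨γ, hne, rfl⟩
    have hγν : γ < ν := ((hpcond α hα).1 γ hne).2.2
    rw [Ordinal.add_one_eq_succ]
    exact hνlim.succ_lt (Cardinal.ord_lt_ord.2 hγν)
  have hgmem : ∀ α < ν.ord, ∀ γ : Cardinal.{0}, p α γ ≠ ∅ → γ.ord + 1 ≤ g α := by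
    intro α hα γ hne
    exact le_csSup ⟨ν.ord, fun x hx => (hgel α hα x hx).le⟩ ⟨γ, hne, rfl⟩
  have hglt : ∀ α < ν.ord, g α < ν.ord := by
    intro α hα
    refine EK.sSup_lt_ord hreg (hgel α hα) ?_
    have hset : {x | ∃ γ : Cardinal.{0}, p α γ ≠ ∅ ∧ x = γ.ord + 1}
        = (fun γ : Cardinal.{0} => γ.ord + 1) '' {γ | γ < ν ∧ p α γ ≠ ∅} := by
      ext x
      constructor
      · rintro ⟨γ, hne, rfl⟩
        exact ⟨γ, ⟨((hpcond α hα).1 γ hne).2.2, hne⟩, rfl⟩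
      · rintro ⟨γ, ⟨_, hne⟩, rfl⟩
        exact ⟨γ, hne, rfl⟩
    rw [hset]
    exact lt_of_le_of_lt Cardinal.mk_image_le ((hpcond α hα).2.2 ν hreg le_rfl)
  -- the thinned set V
  set V : Set Ordinal := {α | α ∈ U' ∧ ∀ α' ∈ U', α' < α → g α' < α} with hVdef
  have hVsub : ∀ α ∈ V, α < ν.ord := fun α hα => hU'sub α hα.1
  have hVunb : ∀ θ < ν.ord, ∃ x ∈ V, θ ≤ x := by
    intro θ₀ hθ₀
    obtain ⟨θ, hθν, hθ₀θ, hθcl⟩ : ∃ θ, θ < ν.ord ∧ θ₀ ≤ θ ∧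
        ∀ α ∈ U', α < θ → g α < θ := by
      set G : Ordinal → Ordinal := fun s =>
        sSup ((fun α => g α + 1) '' (U' ∩ Set.Iio s)) with hGdef
      have hGel : ∀ s, ∀ x ∈ (fun α => g α + 1) '' (U' ∩ Set.Iio s), x < ν.ord := by
        rintro s x ⟨a, ⟨haU', _⟩, rfl⟩
        show g a + 1 < ν.ord
        rw [Ordinal.add_one_eq_succ]
        exact hνlim.succ_lt (hglt a (hU'sub a haU'))
      have hGlt : ∀ s < ν.ord, G s < ν.ord := by
        intro s hs
        refine EK.sSup_lt_ord hreg (hGel s) ?_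
        refine lt_of_le_of_lt Cardinal.mk_image_le ?_
        refine lt_of_le_of_lt (Cardinal.mk_le_mk_of_subset Set.inter_subset_right) ?_
        rw [Ordinal.mk_Iio_ordinal]
        exact Cardinal.lift_lt.2 (Cardinal.lt_ord.1 hs)
      set seq : ℕ → Ordinal := fun n => Nat.rec θ₀
        (fun _ s => max (s + 1) (G s)) n with hseq
      have hseqlt : ∀ n, seq n < ν.ord := by
        intro n
        induction n with
        | zero => exact hθ₀
        | succ n ih =>
          refine max_lt ?_ (hGlt _ ih)
          rw [Ordinal.add_one_eq_succ]
          exact hνlim.succ_lt ih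
      set θ := ⨆ n, seq n with hθdef
      have hθν : θ < ν.ord := by
        refine Ordinal.iSup_lt_ord ?_ hseqlt
        rw [Cardinal.mk_nat]
        rwa [hreg.cof_eq]
      have hle : ∀ n, seq n ≤ θ := fun n => le_ciSup (Ordinal.bddAbove_range _) n
      refine ⟨θ, hθν, hle 0, ?_⟩
      intro a haU' haθ
      obtain ⟨n, hn⟩ : ∃ n, a < seq n := by
        by_contra hcb
        push_neg at hcb
        exact absurd (ciSup_le hcb) (not_le.2 haθ)
      have h1 : g a + 1 ≤ G (seq n) :=
        le_csSup ⟨ν.ord, fun x hx => (hGel _ x hx).le⟩ ⟨a, ⟨haU', hn⟩, rfl⟩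
      have h2 : G (seq n) ≤ seq (n + 1) := le_max_right _ _
      have h3 : g a + 1 ≤ θ := le_trans h1 (le_trans h2 (hle (n + 1)))
      rw [Ordinal.add_one_eq_succ, Order.succ_le_iff] at h3
      exact h3
    obtain ⟨x, hxU', hθx⟩ := hU'unb θ hθν
    set W : Set Ordinal := {x | x ∈ U' ∧ θ ≤ x} with hWdef
    have hWne : W.Nonempty := ⟨x, hxU', hθx⟩
    have hmem := csInf_mem hWne
    refine ⟨sInf W, ⟨hmem.1, ?_⟩, le_trans hθ₀θ hmem.2⟩
    intro α' hα' hlt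
    have hα'θ : α' < θ := by
      by_contra hge
      push_neg at hge
      exact absurd (csInf_le (OrderBot.bddBelow W) (⟨hα', hge⟩ : α' ∈ W)) (not_le.2 hlt)
    exact lt_of_lt_of_le (hθcl α' hα' hα'θ) hmem.2
  have hVcard : Cardinal.mk ↥V = Cardinal.lift.{1} ν := EK.mk_of_unbounded hreg hVsub hVunb
  -- the final set B
  set B : Set (Cardinal.{0} → Set (Ordinal × Ordinal)) := p '' V with hBdef
  have hBA : B ⊆ A := by
    rintro x ⟨α, hαV, rfl⟩
    exact hpA α (hVsub α hαV)
  have hBcard : Cardinal.mk ↥B = Cardinal.lift.{1} ν := by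
    rw [hBdef, Cardinal.mk_image_eq_of_injOn p V
      (fun a ha b hb h => hpinj a b (hVsub _ ha) (hVsub _ hb) h)]
    exact hVcard
  -- key compatibility claim
  have hkey : ∀ α ∈ V, ∀ α' ∈ V, α < α' → ∀ γ : Cardinal.{0},
      p α γ ≠ ∅ → p α' γ ≠ ∅ → p α γ = p α' γ := by
    intro α hαV α' hα'V hlt γ hne hne'
    have hαδ := hVsub α hαV
    have hα'δ := hVsub α' hα'V
    by_cases hγβ : γ.ord < β
    · exact hEncEq α α' hαδ hα'δ ((hαV.1.2).trans (hα'V.1.2).symm) γ hγβ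
    · exfalso
      have h1 : γ.ord + 1 ≤ g α := hgmem α hαδ γ hne
      have h2 : g α < α' := hα'V.2 α hαV.1 hlt
      have h3 : γ.ord < α' := by
        refine lt_of_lt_of_le ?_ (le_trans h1 h2.le)
        rw [Ordinal.add_one_eq_succ]; exact Order.lt_succ _
      have h4 : γ.ord + 1 ≤ f α' := hfmem α' hα'δ γ h3 hne'
      have h5 : f α' < β := hα'V.1.1.2
      refine hγβ ?_
      refine lt_of_lt_of_le ?_ (le_trans h4 h5.le)
      rw [Ordinal.add_one_eq_succ]; exact Order.lt_succ _
  -- pairwise compatibility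
  have hpair : ∀ α ∈ V, ∀ α' ∈ V, α ≤ α' → ∃ r, IsEastonCond μ ν r ∧
      (∀ γ, p α γ ⊆ r γ) ∧ (∀ γ, p α' γ ⊆ r γ) := by
    intro α hαV α' hα'V hle
    have hαδ := hVsub α hαV
    have hα'δ := hVsub α' hα'V
    have hcase : ∀ γ : Cardinal.{0},
        p α γ ∪ p α' γ = p α γ ∨ p α γ ∪ p α' γ = p α' γ := by
      intro γ
      rcases eq_or_lt_of_le hle with rfl | hlt
      · left; exact Set.union_self _
      by_cases hne : p α γ = ∅
      · right; rw [hne, Set.empty_union]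
      by_cases hne' : p α' γ = ∅
      · left; rw [hne', Set.union_empty]
      · left; rw [hkey α hαV α' hα'V hlt γ hne hne', Set.union_self]
    refine ⟨fun γ => p α γ ∪ p α' γ, ⟨?_, ?_, ?_⟩,
      fun γ => Set.subset_union_left, fun γ => Set.subset_union_right⟩
    · intro γ hγ
      have hγ' : p α γ ∪ p α' γ ≠ ∅ := hγ
      rcases hcase γ with h | h
      · rw [h] at hγ'
        exact (hpcond α hαδ).1 γ hγ'
      · rw [h] at hγ'
        exact (hpcond α' hα'δ).1 γ hγ'
    · intro γ hSR hμγ hγν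
      show IsLevyCond μ γ (p α γ ∪ p α' γ)
      rcases hcase γ with h | h
      · rw [h]; exact (hpcond α hαδ).2.1 γ hSR hμγ hγν
      · rw [h]; exact (hpcond α' hα'δ).2.1 γ hSR hμγ hγν
    · intro l hl hlν
      have haleph' : (ℵ₀ : Cardinal.{1}) ≤ Cardinal.lift.{1} l := by
        rw [← Cardinal.lift_aleph0.{1,0}]; exact Cardinal.lift_le.2 hl.1
      set φ : {γ : Cardinal.{0} // γ < l ∧ (fun γ => p α γ ∪ p α' γ) γ ≠ ∅} →
          ({γ : Cardinal.{0} // γ < l ∧ p α γ ≠ ∅} ⊕ {γ : Cardinal.{0} // γ < l ∧ p α' γ ≠ ∅}) :=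
        fun x => if h : p α x.1 ≠ ∅ then Sum.inl ⟨x.1, x.2.1, h⟩ else
          Sum.inr ⟨x.1, x.2.1, by
            intro h0
            apply x.2.2
            show p α x.1 ∪ p α' x.1 = ∅
            rw [not_not.1 h, h0, Set.union_empty]⟩ with hφdef
      have hval : ∀ x, Sum.elim (fun z => z.1) (fun z => z.1) (φ x) = x.1 := by
        intro x
        by_cases h : p α x.1 ≠ ∅
        · simp [hφdef, h]
        · rw [not_not] at h
          simp [hφdef, h]
      have hφinj : Function.Injective φ := by
        intro x x' hxx
        have h := congrArg (Sum.elim (fun z => z.1) (fun z => z.1)) hxx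
        rw [hval, hval] at h
        exact Subtype.ext h
      refine lt_of_le_of_lt (le_trans (Cardinal.mk_le_of_injective hφinj) (le_of_eq ?_))
        (Cardinal.add_lt_of_lt haleph'
          ((hpcond α hαδ).2.2 l hl hlν) ((hpcond α' hα'δ).2.2 l hl hlν))
      rw [Cardinal.mk_sum, Cardinal.lift_id, Cardinal.lift_id]
  refine ⟨B, hBA, hBcard, ?_⟩
  rintro pb ⟨α, hαV, rfl⟩ qb ⟨α', hα'V, rfl⟩
  rcases le_total α α' with h | h
  · exact hpair α hαV α' hα'V h
  · obtain ⟨r, hr, h1, h2⟩ := hpair α' hα'V α hαV h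
    exact ⟨r, hr, h2, h1⟩
end
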